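/- Let (V, 𝓗) be an arrangement, H₀ ∈ 𝓗, with deleted arrangement 𝓗' = 𝓗 ∖ {H₀} and induced arrangement 𝓗'' = {H ∩ H₀ : H ∈ 𝓗'} in H₀. If both 𝓗' and 𝓗'' are reducible, then 𝓗 is reducible. -/

import Mathlib

open scoped Classical

noncomputable section

variable {V : Type*} [AddCommGroup V] [Module ℂ V]

/-- A linear hyperplane in `V`: the kernel of a non-zero linear functional. -/
def IsHyperplane (H : Submodule ℂ V) : Prop :=
  ∃ f : Module.Dual ℂ V, f ≠ 0 ∧ H = LinearMap.ker f

/-- An arrangement: every member of the finite set `𝓗` is a linear hyperplane. -/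
def IsArrangement (𝓗 : Finset (Submodule ℂ V)) : Prop :=
  ∀ H ∈ 𝓗, IsHyperplane H

/-- The span `W(𝓗) ⊆ V⋆` of the defining functionals of the members of `𝓗`,
i.e. the supremum of the dual annihilators of the hyperplanes. -/
def arrSpan (𝓗 : Finset (Submodule ℂ V)) : Submodule ℂ (Module.Dual ℂ V) :=
  ⨆ H ∈ 𝓗, Submodule.dualAnnihilator H

/-- The centre `T(𝓗)`: the common intersection of the members of `𝓗`. -/
def arrCentre (𝓗 : Finset (Submodule ℂ V)) : Submodule ℂ V :=
  ⨅ H ∈ 𝓗, H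

/-- `𝓗` is essential if its centre is zero. -/
def ArrEssential (𝓗 : Finset (Submodule ℂ V)) : Prop :=
  arrCentre 𝓗 = ⊥

/-- `𝓗` is reducible if it admits a u-plus decomposition into two non-empty parts:
a partition `𝓗 = 𝓗₁ ⊎ 𝓗₂` with `W(𝓗) = W(𝓗₁) ⊕ W(𝓗₂)`. -/
def ArrReducible (𝓗 : Finset (Submodule ℂ V)) : Prop :=
  ∃ 𝓗₁ 𝓗₂ : Finset (Submodule ℂ V), 𝓗₁.Nonempty ∧ 𝓗₂.Nonempty ∧
    Disjoint 𝓗₁ 𝓗₂ ∧ 𝓗₁ ∪ 𝓗₂ = 𝓗 ∧ Disjoint (arrSpan 𝓗₁) (arrSpan 𝓗₂)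

/-- `𝓗` is irreducible if it is not reducible. -/
def ArrIrreducible (𝓗 : Finset (Submodule ℂ V)) : Prop :=
  ¬ ArrReducible 𝓗

/-- The induced (restricted) arrangement `𝓗'' = {H ∩ H₀ : H ∈ 𝓗 \ {H₀}}`, viewed as
an arrangement of hyperplanes in the vector space `H₀`. -/
def inducedArr (𝓗 : Finset (Submodule ℂ V)) (H₀ : Submodule ℂ V) :
    Finset (Submodule ℂ ↥H₀) :=
  (𝓗.erase H₀).image fun H => Submodule.comap H₀.subtype H

lemma ann_ker {f : Module.Dual ℂ V} (hf : f ≠ 0) :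
    Submodule.dualAnnihilator (LinearMap.ker f) = Submodule.span ℂ {f} := by
  apply le_antisymm
  · intro g hg
    rw [Submodule.mem_dualAnnihilator] at hg
    obtain ⟨v, hv⟩ : ∃ v, f v ≠ 0 := by
      by_contra h
      push_neg at h
      exact hf (LinearMap.ext fun v => h v)
    have key : g = (g v / f v) • f := by
      ext x
      have hx : (x - (f x / f v) • v) ∈ LinearMap.ker f := by
        simp only [LinearMap.mem_ker, map_sub, map_smul, smul_eq_mul]
        field_simp
        ring
      have h2 := hg _ hx
      simp only [map_sub, map_smul, smul_eq_mul, sub_eq_zero] at h2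
      simp only [LinearMap.smul_apply, smul_eq_mul]
      rw [h2]
      field_simp
    rw [key]
    exact Submodule.smul_mem _ _ (Submodule.mem_span_singleton_self f)
  · rw [Submodule.span_le]
    intro g hg
    simp only [Set.mem_singleton_iff] at hg
    subst hg
    rw [SetLike.mem_coe, Submodule.mem_dualAnnihilator]
    intro w hw
    exact LinearMap.mem_ker.1 hw

lemma ker_dualMap_subtype (H₀ : Submodule ℂ V) :
    LinearMap.ker H₀.subtype.dualMap = Submodule.dualAnnihilator H₀ := by
  ext f
  simp only [LinearMap.mem_ker, Submodule.mem_dualAnnihilator]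
  constructor
  · intro h w hw
    have := LinearMap.congr_fun h ⟨w, hw⟩
    simpa using this
  · intro h
    ext x
    simpa using h x x.2

lemma arrSpan_union (s t : Finset (Submodule ℂ V)) :
    arrSpan (s ∪ t) = arrSpan s ⊔ arrSpan t := by
  simp [arrSpan, Finset.mem_union, iSup_or, iSup_sup_eq]

lemma arrSpan_singleton (H : Submodule ℂ V) :
    arrSpan {H} = Submodule.dualAnnihilator H := by
  simp [arrSpan]

lemma ann_le_arrSpan {H : Submodule ℂ V} {𝓗 : Finset (Submodule ℂ V)} (h : H ∈ 𝓗) :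
    Submodule.dualAnnihilator H ≤ arrSpan 𝓗 :=
  le_iSup₂ (f := fun H _ => Submodule.dualAnnihilator H) H h

lemma arrSpan_mono {s t : Finset (Submodule ℂ V)} (h : s ⊆ t) :
    arrSpan s ≤ arrSpan t := by
  apply iSup₂_le
  intro H hH
  exact ann_le_arrSpan (h hH)

lemma map_arrSpan_le {H₀ : Submodule ℂ V} {𝓚 : Finset (Submodule ℂ V)}
    {𝓖 : Finset (Submodule ℂ ↥H₀)}
    (h : ∀ H ∈ 𝓚, Submodule.comap H₀.subtype H ∈ 𝓖) :
    Submodule.map H₀.subtype.dualMap (arrSpan 𝓚) ≤ arrSpan 𝓖 := by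
  rw [Submodule.map_le_iff_le_comap]
  apply iSup₂_le
  intro H hH
  intro f hf
  rw [Submodule.mem_dualAnnihilator] at hf
  rw [Submodule.mem_comap]
  apply ann_le_arrSpan (h H hH)
  rw [Submodule.mem_dualAnnihilator]
  intro w hw
  rw [Submodule.mem_comap] at hw
  exact hf _ hw

/-- If both the deleted arrangement `𝓗' = 𝓗 \ {H₀}` and the induced
arrangement `𝓗''` on `H₀` are reducible, then `𝓗` is reducible. -/
theorem reducible_of_deleted_and_induced_reducible
    [FiniteDimensional ℂ V]
    (𝓗 : Finset (Submodule ℂ V)) (harr : IsArrangement 𝓗)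
    (H₀ : Submodule ℂ V) (h₀ : H₀ ∈ 𝓗)
    (hdel : ArrReducible (𝓗.erase H₀))
    (hind : ArrReducible (inducedArr 𝓗 H₀)) :
    ArrReducible 𝓗 := by
  obtain ⟨f₀, hf₀, hker⟩ := harr H₀ h₀
  obtain ⟨𝓐, 𝓑, hA0, hB0, hABdisj, hABun, hABspan⟩ := hdel
  have hann : Submodule.dualAnnihilator H₀ = Submodule.span ℂ {f₀} := by
    rw [hker]; exact ann_ker hf₀
  have hH0A : H₀ ∉ 𝓐 := fun h =>
    Finset.notMem_erase H₀ 𝓗 (hABun ▸ Finset.mem_union_left _ h)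
  have hH0B : H₀ ∉ 𝓑 := fun h =>
    Finset.notMem_erase H₀ 𝓗 (hABun ▸ Finset.mem_union_right _ h)
  -- helper: reducibility decomposition obtained by adding H₀ to the first part
  have mk : ∀ (S T : Finset (Submodule ℂ V)), T.Nonempty → Disjoint S T →
      S ∪ T = 𝓗.erase H₀ → Disjoint (arrSpan (insert H₀ S)) (arrSpan T) →
      ArrReducible 𝓗 := by
    intro S T hTne hST hun hdisj
    have hH0T : H₀ ∉ T := fun h =>
      Finset.notMem_erase H₀ 𝓗 (hun ▸ Finset.mem_union_right _ h)
    refine ⟨insert H₀ S, T, Finset.insert_nonempty _ _, hTne, ?_, ?_, hdisj⟩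
    · rw [Finset.disjoint_left]
      intro x hx hxT
      rcases Finset.mem_insert.1 hx with rfl | hx
      · exact hH0T hxT
      · exact Finset.disjoint_left.1 hST hx hxT
    · rw [Finset.insert_union, hun, Finset.insert_erase h₀]
  by_cases hfA : f₀ ∈ arrSpan 𝓐
  · refine mk 𝓐 𝓑 hB0 hABdisj hABun ?_
    have : arrSpan (insert H₀ 𝓐) = arrSpan 𝓐 := by
      rw [Finset.insert_eq, arrSpan_union, arrSpan_singleton, hann, sup_eq_right]
      rw [Submodule.span_le, Set.singleton_subset_iff]
      exact hfA
    rw [this]; exact hABspan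
  by_cases hfB : f₀ ∈ arrSpan 𝓑
  · obtain ⟨S, T, hS, hT, hd, hu, hsp⟩ : ArrReducible 𝓗 := by
      refine mk 𝓑 𝓐 hA0 hABdisj.symm (by rw [Finset.union_comm]; exact hABun) ?_
      have : arrSpan (insert H₀ 𝓑) = arrSpan 𝓑 := by
        rw [Finset.insert_eq, arrSpan_union, arrSpan_singleton, hann, sup_eq_right]
        rw [Submodule.span_le, Set.singleton_subset_iff]
        exact hfB
      rw [this]; exact hABspan.symm
    exact ⟨S, T, hS, hT, hd, hu, hsp⟩
  -- hard case: f₀ ∉ A, f₀ ∉ B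
  obtain ⟨𝓖₁, 𝓖₂, hG1, hG2, hGdisj, hGun, hGspan⟩ := hind
  set q := H₀.subtype.dualMap with hq
  have hqf₀ : q f₀ = 0 := by
    have : f₀ ∈ LinearMap.ker q := by
      rw [hq, ker_dualMap_subtype, hann]
      exact Submodule.mem_span_singleton_self f₀
    exact this
  set 𝓚₁ := (𝓗.erase H₀).filter (fun H => Submodule.comap H₀.subtype H ∈ 𝓖₁) with hK1def
  set 𝓚₂ := (𝓗.erase H₀).filter (fun H => Submodule.comap H₀.subtype H ∉ 𝓖₁) with hK2def
  have hKun : 𝓚₁ ∪ 𝓚₂ = 𝓗.erase H₀ := Finset.filter_union_filter_not_eq _ _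
  have hKdisj : Disjoint 𝓚₁ 𝓚₂ := Finset.disjoint_filter_filter_not _ _ _
  have hmem1 : ∀ H ∈ 𝓚₁, Submodule.comap H₀.subtype H ∈ 𝓖₁ := by
    intro H hH; exact (Finset.mem_filter.1 hH).2
  have hmem2 : ∀ H ∈ 𝓚₂, Submodule.comap H₀.subtype H ∈ 𝓖₂ := by
    intro H hH
    obtain ⟨hHe, hn1⟩ := Finset.mem_filter.1 hH
    have : Submodule.comap H₀.subtype H ∈ inducedArr 𝓗 H₀ :=
      Finset.mem_image_of_mem _ hHe
    rw [← hGun, Finset.mem_union] at this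
    exact this.resolve_left hn1
  have hmap1 : Submodule.map q (arrSpan 𝓚₁) ≤ arrSpan 𝓖₁ := map_arrSpan_le hmem1
  have hmap2 : Submodule.map q (arrSpan 𝓚₂) ≤ arrSpan 𝓖₂ := map_arrSpan_le hmem2
  -- nonemptiness of 𝓚₁ and 𝓚₂
  have hK1ne : 𝓚₁.Nonempty := by
    obtain ⟨g, hg⟩ := hG1
    have : g ∈ inducedArr 𝓗 H₀ := by rw [← hGun]; exact Finset.mem_union_left _ hg
    obtain ⟨H, hHe, hHg⟩ := Finset.mem_image.1 this
    exact ⟨H, Finset.mem_filter.2 ⟨hHe, by rw [hHg]; exact hg⟩⟩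
  have hK2ne : 𝓚₂.Nonempty := by
    obtain ⟨g, hg⟩ := hG2
    have : g ∈ inducedArr 𝓗 H₀ := by rw [← hGun]; exact Finset.mem_union_right _ hg
    obtain ⟨H, hHe, hHg⟩ := Finset.mem_image.1 this
    refine ⟨H, Finset.mem_filter.2 ⟨hHe, ?_⟩⟩
    rw [hHg]
    exact Finset.disjoint_right.1 hGdisj hg
  -- key disjointness claim
  have key : ∀ (S T : Finset (Submodule ℂ V))
      (G G' : Submodule ℂ (Module.Dual ℂ ↥H₀)),
      Submodule.map q (arrSpan S) ≤ G →
      Submodule.map q (arrSpan T) ≤ G' → Disjoint G G' →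
      f₀ ∉ arrSpan T → Disjoint (arrSpan (insert H₀ S)) (arrSpan T) := by
    intro S T G G' hS hT hGG hfT
    rw [Submodule.disjoint_def]
    intro x hx hxT
    rw [Finset.insert_eq, arrSpan_union, arrSpan_singleton, hann] at hx
    obtain ⟨y, hy, z, hz, hyz⟩ := Submodule.mem_sup.1 hx
    have hqy : q y = 0 := by
      obtain ⟨c, rfl⟩ := Submodule.mem_span_singleton.1 hy
      rw [map_smul, hqf₀, smul_zero]
    have hqx1 : q x ∈ G := by
      have : q x = q z := by rw [← hyz, map_add, hqy, zero_add]
      rw [this]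
      exact hS ⟨z, hz, rfl⟩
    have hqx2 : q x ∈ G' := hT ⟨x, hxT, rfl⟩
    have hqx : q x = 0 := Submodule.disjoint_def.1 hGG _ hqx1 hqx2
    have hxk : x ∈ Submodule.span ℂ {f₀} := by
      rw [← hann, ← ker_dualMap_subtype]
      exact hqx
    obtain ⟨c, rfl⟩ := Submodule.mem_span_singleton.1 hxk
    rcases eq_or_ne c 0 with rfl | hc
    · rw [zero_smul]
    · exfalso
      apply hfT
      have := Submodule.smul_mem (arrSpan T) c⁻¹ hxT
      rwa [smul_smul, inv_mul_cancel₀ hc, one_smul] at this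
  by_cases hfK2 : f₀ ∈ arrSpan 𝓚₂
  · by_cases hfK1 : f₀ ∈ arrSpan 𝓚₁
    · -- contradiction
      exfalso
      have hsub1 : 𝓚₁ = (𝓐 ∩ 𝓚₁) ∪ (𝓑 ∩ 𝓚₁) := by
        rw [← Finset.union_inter_distrib_right, hABun, ← hKun]
        rw [Finset.union_inter_cancel_left]
      have hsub2 : 𝓚₂ = (𝓐 ∩ 𝓚₂) ∪ (𝓑 ∩ 𝓚₂) := by
        rw [← Finset.union_inter_distrib_right, hABun, ← hKun]
        rw [Finset.union_inter_cancel_right]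
      have hf1 : f₀ ∈ arrSpan (𝓐 ∩ 𝓚₁) ⊔ arrSpan (𝓑 ∩ 𝓚₁) := by
        rw [← arrSpan_union, ← hsub1]; exact hfK1
      have hf2 : f₀ ∈ arrSpan (𝓐 ∩ 𝓚₂) ⊔ arrSpan (𝓑 ∩ 𝓚₂) := by
        rw [← arrSpan_union, ← hsub2]; exact hfK2
      obtain ⟨a₁, ha₁, b₁, hb₁, hab₁⟩ := Submodule.mem_sup.1 hf1
      obtain ⟨a₂, ha₂, b₂, hb₂, hab₂⟩ := Submodule.mem_sup.1 hf2
      have hAle1 : arrSpan (𝓐 ∩ 𝓚₁) ≤ arrSpan 𝓐 := arrSpan_mono Finset.inter_subset_left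
      have hAle2 : arrSpan (𝓐 ∩ 𝓚₂) ≤ arrSpan 𝓐 := arrSpan_mono Finset.inter_subset_left
      have hBle1 : arrSpan (𝓑 ∩ 𝓚₁) ≤ arrSpan 𝓑 := arrSpan_mono Finset.inter_subset_left
      have hBle2 : arrSpan (𝓑 ∩ 𝓚₂) ≤ arrSpan 𝓑 := arrSpan_mono Finset.inter_subset_left
      have hdiff : a₁ - a₂ = b₂ - b₁ := by
        rw [sub_eq_sub_iff_add_eq_add, hab₁, add_comm b₂ a₂, hab₂]
      have haz : a₁ - a₂ = 0 := by
        apply Submodule.disjoint_def.1 hABspan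
        · exact Submodule.sub_mem _ (hAle1 ha₁) (hAle2 ha₂)
        · rw [hdiff]
          exact Submodule.sub_mem _ (hBle2 hb₂) (hBle1 hb₁)
      have hbz : b₂ - b₁ = 0 := by rw [← hdiff]; exact haz
      have ha12 : a₁ = a₂ := sub_eq_zero.1 haz
      have hb12 : b₁ = b₂ := (sub_eq_zero.1 hbz).symm
      -- q a₁ = 0
      have hqa : q a₁ = 0 := by
        apply Submodule.disjoint_def.1 hGspan
        · exact hmap1 ⟨a₁, arrSpan_mono Finset.inter_subset_right ha₁, rfl⟩
        · rw [ha12]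
          exact hmap2 ⟨a₂, arrSpan_mono Finset.inter_subset_right ha₂, rfl⟩
      have hqb : q b₁ = 0 := by
        apply Submodule.disjoint_def.1 hGspan
        · exact hmap1 ⟨b₁, arrSpan_mono Finset.inter_subset_right hb₁, rfl⟩
        · rw [hb12]
          exact hmap2 ⟨b₂, arrSpan_mono Finset.inter_subset_right hb₂, rfl⟩
      have hax : a₁ ∈ Submodule.span ℂ {f₀} := by
        rw [← hann, ← ker_dualMap_subtype]; exact hqa
      have hbx : b₁ ∈ Submodule.span ℂ {f₀} := by
        rw [← hann, ← ker_dualMap_subtype]; exact hqb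
      obtain ⟨c, hc⟩ := Submodule.mem_span_singleton.1 hax
      obtain ⟨d, hd⟩ := Submodule.mem_span_singleton.1 hbx
      have hcd : (c + d) • f₀ = f₀ := by
        rw [add_smul, hc, hd, hab₁]
      have hcd1 : c + d = 1 := by
        by_contra h
        have : (c + d - 1) • f₀ = 0 := by
          rw [sub_smul, hcd, one_smul, sub_self]
        rcases smul_eq_zero.1 this with h' | h'
        · exact h (by linear_combination h')
        · exact hf₀ h'
      rcases eq_or_ne c 0 with rfl | hcne
      · rcases eq_or_ne d 0 with rfl | hdne
        · simp at hcd1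
        · apply hfB
          have : f₀ = d⁻¹ • b₁ := by rw [← hd, smul_smul, inv_mul_cancel₀ hdne, one_smul]
          rw [this]
          exact Submodule.smul_mem _ _ (hBle1 hb₁)
      · apply hfA
        have : f₀ = c⁻¹ • a₁ := by rw [← hc, smul_smul, inv_mul_cancel₀ hcne, one_smul]
        rw [this]
        exact Submodule.smul_mem _ _ (hAle1 ha₁)
    · -- f₀ ∉ K₁ : put H₀ with 𝓚₂
      exact mk 𝓚₂ 𝓚₁ hK1ne hKdisj.symm (by rw [Finset.union_comm]; exact hKun)
        (key 𝓚₂ 𝓚₁ _ _ hmap2 hmap1 hGspan.symm hfK1)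
  · exact mk 𝓚₁ 𝓚₂ hK2ne hKdisj hKun (key 𝓚₁ 𝓚₂ _ _ hmap1 hmap2 hGspan hfK2)
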